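/- arXiv:2208.04913 — 4 statements merged into one kernel-verified Lean document; each statement's English description precedes it below -/
import Mathlib

section
/- On ℍ¹ with X₁ = ∂_{x₁} + 2x₂ ∂_t and X₂ = ∂_{x₂} - 2x₁ ∂_t, the function u(x₁,x₂,t) = ((x₁²+x₂²)² + t²)^{-1/2} satisfies the sub-Laplace equation X₁²u + X₂²u = 0 at every point (x₁,x₂,t) ≠ (0,0,0). -/
/-- The horizontal vector field `X₁ = ∂_{x₁} + 2x₂ ∂_t` on the first Heisenberg group. -/
noncomputable def X1 (f : ℝ → ℝ → ℝ → ℝ) : ℝ → ℝ → ℝ → ℝ :=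
  fun x₁ x₂ t => deriv (fun a => f a x₂ t) x₁ + 2 * x₂ * deriv (fun a => f x₁ x₂ a) t

/-- The horizontal vector field `X₂ = ∂_{x₂} - 2x₁ ∂_t` on the first Heisenberg group. -/
noncomputable def X2 (f : ℝ → ℝ → ℝ → ℝ) : ℝ → ℝ → ℝ → ℝ :=
  fun x₁ x₂ t => deriv (fun a => f x₁ a t) x₂ - 2 * x₁ * deriv (fun a => f x₁ x₂ a) t

private lemma rpow_comp' {f : ℝ → ℝ} {f' x : ℝ} (p : ℝ) (hf : HasDerivAt f f' x)
    (hx : 0 < f x) :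
    HasDerivAt (fun a => f a ^ p) (p * f x ^ (p - 1) * f') x :=
  (Real.hasDerivAt_rpow_const (Or.inl hx.ne')).comp x hf

private lemma hQa (x₁ x₂ t : ℝ) :
    HasDerivAt (fun a : ℝ => (a ^ 2 + x₂ ^ 2) ^ 2 + t ^ 2) (4 * x₁ * (x₁ ^ 2 + x₂ ^ 2)) x₁ := by
  have := ((((hasDerivAt_pow 2 x₁).add_const (x₂ ^ 2)).pow 2).add_const (t ^ 2))
  exact this.congr_deriv (by simp only [id_eq, Nat.cast_ofNat, Nat.reduceSub, pow_one]; ring)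

private lemma hQb (x₁ x₂ t : ℝ) :
    HasDerivAt (fun b : ℝ => (x₁ ^ 2 + b ^ 2) ^ 2 + t ^ 2) (4 * x₂ * (x₁ ^ 2 + x₂ ^ 2)) x₂ := by
  have := ((((hasDerivAt_pow 2 x₂).const_add (x₁ ^ 2)).pow 2).add_const (t ^ 2))
  exact this.congr_deriv (by simp only [id_eq, Nat.cast_ofNat, Nat.reduceSub, pow_one]; ring)

private lemma hQt (x₁ x₂ t : ℝ) :
    HasDerivAt (fun c : ℝ => (x₁ ^ 2 + x₂ ^ 2) ^ 2 + c ^ 2) (2 * t) t := by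
  have := (hasDerivAt_pow 2 t).const_add ((x₁ ^ 2 + x₂ ^ 2) ^ 2)
  exact this.congr_deriv (by simp only [id_eq, Nat.cast_ofNat, Nat.reduceSub, pow_one])

/-- ∂u/∂x₁ as a `HasDerivAt`. -/
private lemma hux1 (x₁ x₂ t : ℝ) (hg : 0 < (x₁ ^ 2 + x₂ ^ 2) ^ 2 + t ^ 2) :
    HasDerivAt (fun a : ℝ => ((a ^ 2 + x₂ ^ 2) ^ 2 + t ^ 2) ^ (-(1 : ℝ) / 2))
      (-2 * x₁ * (x₁ ^ 2 + x₂ ^ 2) * ((x₁ ^ 2 + x₂ ^ 2) ^ 2 + t ^ 2) ^ (-(3 : ℝ) / 2)) x₁ := by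
  have h := rpow_comp' (-(1 : ℝ) / 2) (hQa x₁ x₂ t) hg
  have e : (-(1 : ℝ) / 2 - 1) = -(3 : ℝ) / 2 := by norm_num
  rw [e] at h
  convert h using 1; ring

private lemma hux2 (x₁ x₂ t : ℝ) (hg : 0 < (x₁ ^ 2 + x₂ ^ 2) ^ 2 + t ^ 2) :
    HasDerivAt (fun b : ℝ => ((x₁ ^ 2 + b ^ 2) ^ 2 + t ^ 2) ^ (-(1 : ℝ) / 2))
      (-2 * x₂ * (x₁ ^ 2 + x₂ ^ 2) * ((x₁ ^ 2 + x₂ ^ 2) ^ 2 + t ^ 2) ^ (-(3 : ℝ) / 2)) x₂ := by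
  have h := rpow_comp' (-(1 : ℝ) / 2) (hQb x₁ x₂ t) hg
  have e : (-(1 : ℝ) / 2 - 1) = -(3 : ℝ) / 2 := by norm_num
  rw [e] at h
  convert h using 1; ring

private lemma hut (x₁ x₂ t : ℝ) (hg : 0 < (x₁ ^ 2 + x₂ ^ 2) ^ 2 + t ^ 2) :
    HasDerivAt (fun c : ℝ => ((x₁ ^ 2 + x₂ ^ 2) ^ 2 + c ^ 2) ^ (-(1 : ℝ) / 2))
      (-t * ((x₁ ^ 2 + x₂ ^ 2) ^ 2 + t ^ 2) ^ (-(3 : ℝ) / 2)) t := by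
  have h := rpow_comp' (-(1 : ℝ) / 2) (hQt x₁ x₂ t) hg
  have e : (-(1 : ℝ) / 2 - 1) = -(3 : ℝ) / 2 := by norm_num
  rw [e] at h
  convert h using 1; ring

/-- Closed form for `X1 u` on the region where the Korányi gauge is positive. -/
private lemma X1u_eq (u : ℝ → ℝ → ℝ → ℝ)
    (hu : ∀ x₁ x₂ t, u x₁ x₂ t = ((x₁ ^ 2 + x₂ ^ 2) ^ 2 + t ^ 2) ^ (-(1 : ℝ) / 2))
    (x₁ x₂ t : ℝ) (hg : 0 < (x₁ ^ 2 + x₂ ^ 2) ^ 2 + t ^ 2) :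
    X1 u x₁ x₂ t =
      -2 * (x₁ * (x₁ ^ 2 + x₂ ^ 2) + x₂ * t) *
        ((x₁ ^ 2 + x₂ ^ 2) ^ 2 + t ^ 2) ^ (-(3 : ℝ) / 2) := by
  have e1 : (fun a => u a x₂ t) = fun a : ℝ => ((a ^ 2 + x₂ ^ 2) ^ 2 + t ^ 2) ^ (-(1 : ℝ) / 2) :=
    funext fun a => hu a x₂ t
  have e2 : (fun c => u x₁ x₂ c) = fun c : ℝ => ((x₁ ^ 2 + x₂ ^ 2) ^ 2 + c ^ 2) ^ (-(1 : ℝ) / 2) :=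
    funext fun c => hu x₁ x₂ c
  simp only [X1, e1, e2, (hux1 x₁ x₂ t hg).deriv, (hut x₁ x₂ t hg).deriv]
  ring

private lemma X2u_eq (u : ℝ → ℝ → ℝ → ℝ)
    (hu : ∀ x₁ x₂ t, u x₁ x₂ t = ((x₁ ^ 2 + x₂ ^ 2) ^ 2 + t ^ 2) ^ (-(1 : ℝ) / 2))
    (x₁ x₂ t : ℝ) (hg : 0 < (x₁ ^ 2 + x₂ ^ 2) ^ 2 + t ^ 2) :
    X2 u x₁ x₂ t =
      -2 * (x₂ * (x₁ ^ 2 + x₂ ^ 2) - x₁ * t) *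
        ((x₁ ^ 2 + x₂ ^ 2) ^ 2 + t ^ 2) ^ (-(3 : ℝ) / 2) := by
  have e1 : (fun b => u x₁ b t) = fun b : ℝ => ((x₁ ^ 2 + b ^ 2) ^ 2 + t ^ 2) ^ (-(1 : ℝ) / 2) :=
    funext fun b => hu x₁ b t
  have e2 : (fun c => u x₁ x₂ c) = fun c : ℝ => ((x₁ ^ 2 + x₂ ^ 2) ^ 2 + c ^ 2) ^ (-(1 : ℝ) / 2) :=
    funext fun c => hu x₁ x₂ c
  simp only [X2, e1, e2, (hux2 x₁ x₂ t hg).deriv, (hut x₁ x₂ t hg).deriv]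
  ring

/-- On ℍ¹, the function `u = ((x₁²+x₂²)² + t²)^{-1/2}` (the Korányi norm to the power
`2 - Q = -2`) satisfies the sub-Laplace equation `X₁²u + X₂²u = 0` away from the origin. -/
theorem stmt_5 (u : ℝ → ℝ → ℝ → ℝ)
    (hu : ∀ x₁ x₂ t, u x₁ x₂ t = ((x₁ ^ 2 + x₂ ^ 2) ^ 2 + t ^ 2) ^ (-(1 : ℝ) / 2))
    (x₁ x₂ t : ℝ) (h : ¬(x₁ = 0 ∧ x₂ = 0 ∧ t = 0)) :
    X1 (X1 u) x₁ x₂ t + X2 (X2 u) x₁ x₂ t = 0 := by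
  -- positivity of the gauge at the point
  have hg : 0 < (x₁ ^ 2 + x₂ ^ 2) ^ 2 + t ^ 2 := by
    have hne : x₁ ≠ 0 ∨ x₂ ≠ 0 ∨ t ≠ 0 := by tauto
    rcases hne with h1 | h2 | h3
    · have : 0 < x₁ ^ 2 := by positivity
      nlinarith [sq_nonneg x₂, sq_nonneg t, sq_nonneg (x₁ ^ 2 + x₂ ^ 2)]
    · have : 0 < x₂ ^ 2 := by positivity
      nlinarith [sq_nonneg x₁, sq_nonneg t, sq_nonneg (x₁ ^ 2 + x₂ ^ 2)]
    · have : 0 < t ^ 2 := by positivity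
      nlinarith [sq_nonneg (x₁ ^ 2 + x₂ ^ 2)]
  -- continuity of the gauge in each variable, giving eventual positivity
  have hca : ∀ᶠ a in nhds x₁, 0 < (a ^ 2 + x₂ ^ 2) ^ 2 + t ^ 2 := by
    have hc : Continuous fun a : ℝ => (a ^ 2 + x₂ ^ 2) ^ 2 + t ^ 2 := by continuity
    exact (hc.tendsto x₁).eventually (eventually_gt_nhds hg)
  have hcb : ∀ᶠ b in nhds x₂, 0 < (x₁ ^ 2 + b ^ 2) ^ 2 + t ^ 2 := by
    have hc : Continuous fun b : ℝ => (x₁ ^ 2 + b ^ 2) ^ 2 + t ^ 2 := by continuity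
    exact (hc.tendsto x₂).eventually (eventually_gt_nhds hg)
  have hct : ∀ᶠ c in nhds t, 0 < (x₁ ^ 2 + x₂ ^ 2) ^ 2 + c ^ 2 := by
    have hc : Continuous fun c : ℝ => (x₁ ^ 2 + x₂ ^ 2) ^ 2 + c ^ 2 := by continuity
    exact (hc.tendsto t).eventually (eventually_gt_nhds hg)
  set r : ℝ := x₁ ^ 2 + x₂ ^ 2 with hr
  set g : ℝ := (x₁ ^ 2 + x₂ ^ 2) ^ 2 + t ^ 2 with hgdef
  -- second derivatives: replace X1 u, X2 u by the closed forms near the point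
  have hD1 : deriv (fun a => X1 u a x₂ t) x₁ =
      deriv (fun a : ℝ => -2 * (a * (a ^ 2 + x₂ ^ 2) + x₂ * t) *
        ((a ^ 2 + x₂ ^ 2) ^ 2 + t ^ 2) ^ (-(3 : ℝ) / 2)) x₁ := by
    apply Filter.EventuallyEq.deriv_eq
    filter_upwards [hca] with a ha
    exact X1u_eq u hu a x₂ t ha
  have hD2 : deriv (fun c => X1 u x₁ x₂ c) t =
      deriv (fun c : ℝ => -2 * (x₁ * (x₁ ^ 2 + x₂ ^ 2) + x₂ * c) *
        ((x₁ ^ 2 + x₂ ^ 2) ^ 2 + c ^ 2) ^ (-(3 : ℝ) / 2)) t := by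
    apply Filter.EventuallyEq.deriv_eq
    filter_upwards [hct] with c hc
    exact X1u_eq u hu x₁ x₂ c hc
  have hE1 : deriv (fun b => X2 u x₁ b t) x₂ =
      deriv (fun b : ℝ => -2 * (b * (x₁ ^ 2 + b ^ 2) - x₁ * t) *
        ((x₁ ^ 2 + b ^ 2) ^ 2 + t ^ 2) ^ (-(3 : ℝ) / 2)) x₂ := by
    apply Filter.EventuallyEq.deriv_eq
    filter_upwards [hcb] with b hb
    exact X2u_eq u hu x₁ b t hb
  have hE2 : deriv (fun c => X2 u x₁ x₂ c) t =
      deriv (fun c : ℝ => -2 * (x₂ * (x₁ ^ 2 + x₂ ^ 2) - x₁ * c) *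
        ((x₁ ^ 2 + x₂ ^ 2) ^ 2 + c ^ 2) ^ (-(3 : ℝ) / 2)) t := by
    apply Filter.EventuallyEq.deriv_eq
    filter_upwards [hct] with c hc
    exact X2u_eq u hu x₁ x₂ c hc
  -- compute the four derivatives of the closed forms
  have hP1a : HasDerivAt (fun a : ℝ => -2 * (a * (a ^ 2 + x₂ ^ 2) + x₂ * t))
      (-2 * (3 * x₁ ^ 2 + x₂ ^ 2)) x₁ := by
    have := (((hasDerivAt_id x₁).mul ((hasDerivAt_pow 2 x₁).add_const (x₂ ^ 2))).add_const
      (x₂ * t)).const_mul (-2 : ℝ)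
    exact this.congr_deriv (by simp only [id_eq, Nat.cast_ofNat, Nat.reduceSub, pow_one]; ring)
  have hP1t : HasDerivAt (fun c : ℝ => -2 * (x₁ * (x₁ ^ 2 + x₂ ^ 2) + x₂ * c))
      (-2 * x₂) t := by
    have := (((hasDerivAt_id t).const_mul x₂).const_add
      (x₁ * (x₁ ^ 2 + x₂ ^ 2))).const_mul (-2 : ℝ)
    exact this.congr_deriv (by ring)
  have hP2b : HasDerivAt (fun b : ℝ => -2 * (b * (x₁ ^ 2 + b ^ 2) - x₁ * t))
      (-2 * (x₁ ^ 2 + 3 * x₂ ^ 2)) x₂ := by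
    have := (((hasDerivAt_id x₂).mul ((hasDerivAt_pow 2 x₂).const_add (x₁ ^ 2))).sub_const
      (x₁ * t)).const_mul (-2 : ℝ)
    exact this.congr_deriv (by simp only [id_eq, Nat.cast_ofNat, Nat.reduceSub, pow_one]; ring)
  have hP2t : HasDerivAt (fun c : ℝ => -2 * (x₂ * (x₁ ^ 2 + x₂ ^ 2) - x₁ * c))
      (2 * x₁) t := by
    have := ((((hasDerivAt_id t).const_mul x₁).const_sub
      (x₂ * (x₁ ^ 2 + x₂ ^ 2)))).const_mul (-2 : ℝ)
    exact this.congr_deriv (by ring)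
  have hR := fun {f : ℝ → ℝ} {f' x : ℝ} (hf : HasDerivAt f f' x) (hx : 0 < f x) =>
    rpow_comp' (-(3 : ℝ) / 2) hf hx
  have e35 : (-(3 : ℝ) / 2 - 1) = -(5 : ℝ) / 2 := by norm_num
  have hQ1a := hR (hQa x₁ x₂ t) hg
  have hQ1t := hR (hQt x₁ x₂ t) hg
  have hQ1b := hR (hQb x₁ x₂ t) hg
  rw [e35] at hQ1a hQ1t hQ1b
  have hF1a := (hP1a.mul hQ1a).deriv
  have hF1t := (hP1t.mul hQ1t).deriv
  have hF2b := (hP2b.mul hQ1b).deriv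
  have hF2t := (hP2t.mul hQ1t).deriv
  -- assemble
  have hsplit : g ^ (-(3 : ℝ) / 2) = g * g ^ (-(5 : ℝ) / 2) := by
    have e : (-(3 : ℝ) / 2) = 1 + -(5 : ℝ) / 2 := by norm_num
    rw [e, Real.rpow_add hg, Real.rpow_one]
  show (deriv (fun a => X1 u a x₂ t) x₁ + 2 * x₂ * deriv (fun c => X1 u x₁ x₂ c) t) +
    (deriv (fun b => X2 u x₁ b t) x₂ - 2 * x₁ * deriv (fun c => X2 u x₁ x₂ c) t) = 0
  simp only [Pi.mul_def] at hF1a hF1t hF2b hF2t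
  rw [hD1, hD2, hE1, hE2, hF1a, hF1t, hF2b, hF2t, hsplit]
  ring
end

section
/- On ℍ¹ with X₁ = ∂_{x₁} + 2x₂ ∂_t and X₂ = ∂_{x₂} - 2x₁ ∂_t, the Korányi norm N(x₁,x₂,t) = ((x₁²+x₂²)²+t²)^{1/4} satisfies the horizontal ∞-Laplace equation ℒ_∞ N := (1/2)⟨∇₀(|∇₀N|₀²), ∇₀N⟩ = 0 at every point where x₁²+x₂² ≠ 0, where ∇₀f = (X₁f, X₂f) and ⟨(a,b),(c,d)⟩ = ac+bd. -/
/-- The Korányi norm on ℍ¹. -/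
noncomputable def KoranyiN : ℝ → ℝ → ℝ → ℝ :=
  fun x₁ x₂ t => ((x₁ ^ 2 + x₂ ^ 2) ^ 2 + t ^ 2) ^ ((1 : ℝ) / 4)

/-- The squared horizontal gradient norm `|∇₀N|₀² = (X₁N)² + (X₂N)²` of the Korányi norm. -/
noncomputable def G : ℝ → ℝ → ℝ → ℝ :=
  fun x₁ x₂ t => (X1 KoranyiN x₁ x₂ t) ^ 2 + (X2 KoranyiN x₁ x₂ t) ^ 2

/-- closed form for `G` away from the center -/
noncomputable def g : ℝ → ℝ → ℝ → ℝ :=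
  fun x₁ x₂ t => (x₁ ^ 2 + x₂ ^ 2) * ((x₁ ^ 2 + x₂ ^ 2) ^ 2 + t ^ 2) ^ (-(1 : ℝ) / 2)

lemma hasDerivAt_inner1 (b c x : ℝ) :
    HasDerivAt (fun a : ℝ => (a ^ 2 + b) ^ 2 + c) (4 * x * (x ^ 2 + b)) x := by
  have h := ((((hasDerivAt_id' x).fun_pow 2).add_const b).fun_pow 2).add_const c
  refine h.congr_deriv ?_
  norm_num
  ring

lemma hasDerivAt_inner3 (b x : ℝ) :
    HasDerivAt (fun a : ℝ => b + a ^ 2) (2 * x) x := by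
  have h := ((hasDerivAt_id' x).fun_pow 2).const_add b
  refine h.congr_deriv ?_
  norm_num

lemma dN1 (x₁ x₂ t : ℝ) (hρ : (x₁ ^ 2 + x₂ ^ 2) ^ 2 + t ^ 2 ≠ 0) :
    deriv (fun a => KoranyiN a x₂ t) x₁
      = (x₁ * (x₁ ^ 2 + x₂ ^ 2)) * ((x₁ ^ 2 + x₂ ^ 2) ^ 2 + t ^ 2) ^ (-(3 : ℝ) / 4) := by
  have h := (hasDerivAt_inner1 (x₂ ^ 2) (t ^ 2) x₁).rpow_const (p := (1 : ℝ)/4) (Or.inl hρ)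
  rw [show ((1:ℝ)/4 - 1) = -(3:ℝ)/4 by norm_num] at h
  have := h.deriv
  unfold KoranyiN
  rw [this]; ring

lemma dN2 (x₁ x₂ t : ℝ) (hρ : (x₁ ^ 2 + x₂ ^ 2) ^ 2 + t ^ 2 ≠ 0) :
    deriv (fun a => KoranyiN x₁ a t) x₂
      = (x₂ * (x₁ ^ 2 + x₂ ^ 2)) * ((x₁ ^ 2 + x₂ ^ 2) ^ 2 + t ^ 2) ^ (-(3 : ℝ) / 4) := by
  have h' : ((x₂ ^ 2 + x₁ ^ 2) ^ 2 + t ^ 2) ≠ 0 := by rw [add_comm (x₂^2)]; exact hρ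
  have h := (hasDerivAt_inner1 (x₁ ^ 2) (t ^ 2) x₂).rpow_const (p := (1 : ℝ)/4) (Or.inl h')
  rw [show ((1:ℝ)/4 - 1) = -(3:ℝ)/4 by norm_num] at h
  have hd := h.deriv
  unfold KoranyiN
  have : (fun a => ((x₁ ^ 2 + a ^ 2) ^ 2 + t ^ 2) ^ ((1:ℝ)/4))
      = (fun a => ((a ^ 2 + x₁ ^ 2) ^ 2 + t ^ 2) ^ ((1:ℝ)/4)) := by
    funext a; rw [add_comm (x₁^2)]
  rw [this, hd, add_comm (x₂^2)]; ring

lemma dN3 (x₁ x₂ t : ℝ) (hρ : (x₁ ^ 2 + x₂ ^ 2) ^ 2 + t ^ 2 ≠ 0) :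
    deriv (fun a => KoranyiN x₁ x₂ a) t
      = (t / 2) * ((x₁ ^ 2 + x₂ ^ 2) ^ 2 + t ^ 2) ^ (-(3 : ℝ) / 4) := by
  have h := (hasDerivAt_inner3 ((x₁ ^ 2 + x₂ ^ 2) ^ 2) t).rpow_const (p := (1 : ℝ)/4)
    (Or.inl hρ)
  rw [show ((1:ℝ)/4 - 1) = -(3:ℝ)/4 by norm_num] at h
  have := h.deriv
  unfold KoranyiN
  rw [this]; ring

lemma X1N (x₁ x₂ t : ℝ) (hρ : (x₁ ^ 2 + x₂ ^ 2) ^ 2 + t ^ 2 ≠ 0) :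
    X1 KoranyiN x₁ x₂ t
      = (x₁ * (x₁ ^ 2 + x₂ ^ 2) + x₂ * t) * ((x₁ ^ 2 + x₂ ^ 2) ^ 2 + t ^ 2) ^ (-(3 : ℝ) / 4) := by
  unfold X1
  rw [dN1 x₁ x₂ t hρ, dN3 x₁ x₂ t hρ]; ring

lemma X2N (x₁ x₂ t : ℝ) (hρ : (x₁ ^ 2 + x₂ ^ 2) ^ 2 + t ^ 2 ≠ 0) :
    X2 KoranyiN x₁ x₂ t
      = (x₂ * (x₁ ^ 2 + x₂ ^ 2) - x₁ * t) * ((x₁ ^ 2 + x₂ ^ 2) ^ 2 + t ^ 2) ^ (-(3 : ℝ) / 4) := by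
  unfold X2
  rw [dN2 x₁ x₂ t hρ, dN3 x₁ x₂ t hρ]; ring

lemma Geq (x₁ x₂ t : ℝ) (hρ : 0 < (x₁ ^ 2 + x₂ ^ 2) ^ 2 + t ^ 2) :
    G x₁ x₂ t = g x₁ x₂ t := by
  have hne := hρ.ne'
  unfold G g
  rw [X1N x₁ x₂ t hne, X2N x₁ x₂ t hne]
  set ρ := (x₁ ^ 2 + x₂ ^ 2) ^ 2 + t ^ 2 with hρdef
  have h1 : ρ ^ (-(3:ℝ)/4) * ρ ^ (-(3:ℝ)/4) = ρ ^ (-(3:ℝ)/2) := by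
    rw [← Real.rpow_add hρ]; norm_num
  have h2 : ρ * ρ ^ (-(3:ℝ)/2) = ρ ^ (-(1:ℝ)/2) := by
    nth_rewrite 1 [← Real.rpow_one ρ]
    rw [← Real.rpow_add hρ]; norm_num
  have expand : (x₁ * (x₁ ^ 2 + x₂ ^ 2) + x₂ * t) ^ 2 + (x₂ * (x₁ ^ 2 + x₂ ^ 2) - x₁ * t) ^ 2
      = (x₁ ^ 2 + x₂ ^ 2) * ρ := by rw [hρdef]; ring
  calc ((x₁ * (x₁ ^ 2 + x₂ ^ 2) + x₂ * t) * ρ ^ (-(3:ℝ)/4)) ^ 2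
        + ((x₂ * (x₁ ^ 2 + x₂ ^ 2) - x₁ * t) * ρ ^ (-(3:ℝ)/4)) ^ 2
      = ((x₁ * (x₁ ^ 2 + x₂ ^ 2) + x₂ * t) ^ 2 + (x₂ * (x₁ ^ 2 + x₂ ^ 2) - x₁ * t) ^ 2)
        * (ρ ^ (-(3:ℝ)/4) * ρ ^ (-(3:ℝ)/4)) := by ring
    _ = (x₁ ^ 2 + x₂ ^ 2) * (ρ * ρ ^ (-(3:ℝ)/2)) := by rw [h1, expand]; ring
    _ = (x₁ ^ 2 + x₂ ^ 2) * ρ ^ (-(1:ℝ)/2) := by rw [h2]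

lemma dg1 (x₁ x₂ t : ℝ) (hρ : (x₁ ^ 2 + x₂ ^ 2) ^ 2 + t ^ 2 ≠ 0) :
    deriv (fun a => g a x₂ t) x₁
      = 2 * x₁ * ((x₁ ^ 2 + x₂ ^ 2) ^ 2 + t ^ 2) ^ (-(1 : ℝ) / 2)
        - 2 * x₁ * (x₁ ^ 2 + x₂ ^ 2) ^ 2
          * ((x₁ ^ 2 + x₂ ^ 2) ^ 2 + t ^ 2) ^ (-(3 : ℝ) / 2) := by
  have h1 : HasDerivAt (fun a : ℝ => a ^ 2 + x₂ ^ 2) (2 * x₁) x₁ := by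
    have := ((hasDerivAt_id' x₁).fun_pow 2).add_const (x₂ ^ 2)
    refine this.congr_deriv ?_; norm_num
  have h2 := (hasDerivAt_inner1 (x₂ ^ 2) (t ^ 2) x₁).rpow_const (p := -(1 : ℝ)/2) (Or.inl hρ)
  rw [show (-(1:ℝ)/2 - 1) = -(3:ℝ)/2 by norm_num] at h2
  have h := h1.fun_mul h2
  have := h.deriv
  unfold g
  rw [this]; ring

lemma dg2 (x₁ x₂ t : ℝ) (hρ : (x₁ ^ 2 + x₂ ^ 2) ^ 2 + t ^ 2 ≠ 0) :
    deriv (fun a => g x₁ a t) x₂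
      = 2 * x₂ * ((x₁ ^ 2 + x₂ ^ 2) ^ 2 + t ^ 2) ^ (-(1 : ℝ) / 2)
        - 2 * x₂ * (x₁ ^ 2 + x₂ ^ 2) ^ 2
          * ((x₁ ^ 2 + x₂ ^ 2) ^ 2 + t ^ 2) ^ (-(3 : ℝ) / 2) := by
  have h' : ((x₂ ^ 2 + x₁ ^ 2) ^ 2 + t ^ 2) ≠ 0 := by rw [add_comm (x₂^2)]; exact hρ
  have h1 : HasDerivAt (fun a : ℝ => a ^ 2 + x₁ ^ 2) (2 * x₂) x₂ := by
    have := ((hasDerivAt_id' x₂).fun_pow 2).add_const (x₁ ^ 2)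
    refine this.congr_deriv ?_; norm_num
  have h2 := (hasDerivAt_inner1 (x₁ ^ 2) (t ^ 2) x₂).rpow_const (p := -(1 : ℝ)/2) (Or.inl h')
  rw [show (-(1:ℝ)/2 - 1) = -(3:ℝ)/2 by norm_num] at h2
  have h := h1.fun_mul h2
  have hd := h.deriv
  unfold g
  have heq : (fun a => (x₁ ^ 2 + a ^ 2) * ((x₁ ^ 2 + a ^ 2) ^ 2 + t ^ 2) ^ (-(1:ℝ)/2))
      = (fun a => (a ^ 2 + x₁ ^ 2) * ((a ^ 2 + x₁ ^ 2) ^ 2 + t ^ 2) ^ (-(1:ℝ)/2)) := by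
    funext a; rw [add_comm (x₁ ^ 2)]
  rw [heq, hd, add_comm (x₂ ^ 2)]; ring

lemma dg3 (x₁ x₂ t : ℝ) (hρ : (x₁ ^ 2 + x₂ ^ 2) ^ 2 + t ^ 2 ≠ 0) :
    deriv (fun a => g x₁ x₂ a) t
      = -(x₁ ^ 2 + x₂ ^ 2) * t * ((x₁ ^ 2 + x₂ ^ 2) ^ 2 + t ^ 2) ^ (-(3 : ℝ) / 2) := by
  have h2 := (hasDerivAt_inner3 ((x₁ ^ 2 + x₂ ^ 2) ^ 2) t).rpow_const (p := -(1 : ℝ)/2)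
    (Or.inl hρ)
  rw [show (-(1:ℝ)/2 - 1) = -(3:ℝ)/2 by norm_num] at h2
  have h := h2.const_mul (x₁ ^ 2 + x₂ ^ 2)
  have := h.deriv
  unfold g
  rw [this]; ring

/-- The Korányi norm satisfies the horizontal ∞-Laplace equation
`ℒ_∞ N = (1/2)⟨∇₀(|∇₀N|₀²), ∇₀N⟩ = 0` wherever `x₁² + x₂² ≠ 0`. -/
theorem stmt_6 (x₁ x₂ t : ℝ) (h : x₁ ^ 2 + x₂ ^ 2 ≠ 0) :
    (1 / 2) * (X1 G x₁ x₂ t * X1 KoranyiN x₁ x₂ t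
      + X2 G x₁ x₂ t * X2 KoranyiN x₁ x₂ t) = 0 := by
  have hr2 : 0 < x₁ ^ 2 + x₂ ^ 2 := lt_of_le_of_ne (by positivity) (Ne.symm h)
  have hρ : 0 < (x₁ ^ 2 + x₂ ^ 2) ^ 2 + t ^ 2 := by positivity
  have hne := hρ.ne'
  -- G agrees with g near the point, in each variable
  have hcont1 : ContinuousAt (fun a : ℝ => (a ^ 2 + x₂ ^ 2) ^ 2 + t ^ 2) x₁ := by fun_prop
  have hcont2 : ContinuousAt (fun a : ℝ => (x₁ ^ 2 + a ^ 2) ^ 2 + t ^ 2) x₂ := by fun_prop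
  have hcont3 : ContinuousAt (fun a : ℝ => (x₁ ^ 2 + x₂ ^ 2) ^ 2 + a ^ 2) t := by fun_prop
  have hev1 : (fun a => G a x₂ t) =ᶠ[nhds x₁] (fun a => g a x₂ t) := by
    filter_upwards [hcont1.eventually (eventually_gt_nhds hρ)] with a ha
    exact Geq a x₂ t ha
  have hev2 : (fun a => G x₁ a t) =ᶠ[nhds x₂] (fun a => g x₁ a t) := by
    filter_upwards [hcont2.eventually (eventually_gt_nhds hρ)] with a ha
    exact Geq x₁ a t ha
  have hev3 : (fun a => G x₁ x₂ a) =ᶠ[nhds t] (fun a => g x₁ x₂ a) := by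
    filter_upwards [hcont3.eventually (eventually_gt_nhds hρ)] with a ha
    exact Geq x₁ x₂ a ha
  have e1 : X1 G x₁ x₂ t = X1 g x₁ x₂ t := by
    unfold X1; rw [hev1.deriv_eq, hev3.deriv_eq]
  have e2 : X2 G x₁ x₂ t = X2 g x₁ x₂ t := by
    unfold X2; rw [hev2.deriv_eq, hev3.deriv_eq]
  rw [e1, e2, X1N x₁ x₂ t hne, X2N x₁ x₂ t hne]
  unfold X1 X2
  rw [dg1 x₁ x₂ t hne, dg2 x₁ x₂ t hne, dg3 x₁ x₂ t hne]
  set ρ := (x₁ ^ 2 + x₂ ^ 2) ^ 2 + t ^ 2 with hρdef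
  have key : ρ ^ (-(1:ℝ)/2) = ρ * ρ ^ (-(3:ℝ)/2) := by
    nth_rewrite 2 [← Real.rpow_one ρ]
    rw [← Real.rpow_add hρ]; norm_num
  rw [key, hρdef]
  ring
end

section
/- On ℍ¹, the sub-Laplacian of the Korányi norm satisfies ℒN := X₁²N + X₂²N = 3·|∇₀N|₀²/N at every point where x₁²+x₂² ≠ 0. (Here 3 = Q-1 with Q = 4 the homogeneous dimension.) -/
lemma inner1 (a b c : ℝ) : HasDerivAt (fun x : ℝ => (x^2+b^2)^2+c^2) (4*a*(a^2+b^2)) a := by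
  have := (((hasDerivAt_pow 2 a).add_const (b^2)).pow 2).add_const (c^2)
  refine this.congr_deriv ?_; push_cast; ring

lemma inner2 (a b c : ℝ) : HasDerivAt (fun x : ℝ => (a^2+x^2)^2+c^2) (4*b*(a^2+b^2)) b := by
  have := ((((hasDerivAt_pow 2 b).const_add (a^2)).pow 2)).add_const (c^2)
  refine this.congr_deriv ?_; push_cast; ring

lemma inner3 (a b c : ℝ) : HasDerivAt (fun x : ℝ => (a^2+b^2)^2+x^2) (2*c) c := by
  have := ((hasDerivAt_pow 2 c).const_add ((a^2+b^2)^2))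
  refine this.congr_deriv ?_; push_cast; ring

lemma korn_d1 (a b c : ℝ) (hp : 0 < (a^2+b^2)^2+c^2) :
    HasDerivAt (fun x => KoranyiN x b c) (a*(a^2+b^2) * ((a^2+b^2)^2+c^2) ^ (-(3:ℝ)/4)) a := by
  have h2 := (inner1 a b c).rpow_const (p := (1:ℝ)/4) (Or.inl hp.ne')
  have he : ((1:ℝ)/4 - 1) = -(3:ℝ)/4 := by norm_num
  rw [he] at h2
  unfold KoranyiN; convert h2 using 1; ring

lemma korn_d2 (a b c : ℝ) (hp : 0 < (a^2+b^2)^2+c^2) :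
    HasDerivAt (fun x => KoranyiN a x c) (b*(a^2+b^2) * ((a^2+b^2)^2+c^2) ^ (-(3:ℝ)/4)) b := by
  have h2 := (inner2 a b c).rpow_const (p := (1:ℝ)/4) (Or.inl hp.ne')
  have he : ((1:ℝ)/4 - 1) = -(3:ℝ)/4 := by norm_num
  rw [he] at h2
  unfold KoranyiN; convert h2 using 1; ring

lemma korn_d3 (a b c : ℝ) (hp : 0 < (a^2+b^2)^2+c^2) :
    HasDerivAt (fun x => KoranyiN a b x) (c/2 * ((a^2+b^2)^2+c^2) ^ (-(3:ℝ)/4)) c := by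
  have h2 := (inner3 a b c).rpow_const (p := (1:ℝ)/4) (Or.inl hp.ne')
  have he : ((1:ℝ)/4 - 1) = -(3:ℝ)/4 := by norm_num
  rw [he] at h2
  unfold KoranyiN; convert h2 using 1; ring

lemma X1K (a b c : ℝ) (hp : 0 < (a^2+b^2)^2+c^2) :
    X1 KoranyiN a b c = (a*(a^2+b^2) + b*c) * ((a^2+b^2)^2+c^2) ^ (-(3:ℝ)/4) := by
  unfold X1
  rw [(korn_d1 a b c hp).deriv, (korn_d3 a b c hp).deriv]
  ring

lemma X2K (a b c : ℝ) (hp : 0 < (a^2+b^2)^2+c^2) :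
    X2 KoranyiN a b c = (b*(a^2+b^2) - a*c) * ((a^2+b^2)^2+c^2) ^ (-(3:ℝ)/4) := by
  unfold X2
  rw [(korn_d2 a b c hp).deriv, (korn_d3 a b c hp).deriv]
  ring

/-- On ℍ¹, the sub-Laplacian of the Korányi norm satisfies
`ℒN = X₁²N + X₂²N = 3 |∇₀N|₀² / N` wherever `x₁² + x₂² ≠ 0` (here `3 = Q - 1`, `Q = 4`). -/
theorem stmt_8 (x₁ x₂ t : ℝ) (h : x₁ ^ 2 + x₂ ^ 2 ≠ 0) :
    X1 (X1 KoranyiN) x₁ x₂ t + X2 (X2 KoranyiN) x₁ x₂ t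
      = 3 * ((X1 KoranyiN x₁ x₂ t) ^ 2 + (X2 KoranyiN x₁ x₂ t) ^ 2)
        / KoranyiN x₁ x₂ t := by
  have hr : 0 < x₁^2 + x₂^2 := lt_of_le_of_ne (by positivity) (Ne.symm h)
  have hρ : 0 < (x₁^2+x₂^2)^2 + t^2 := by positivity
  have hρt : ∀ c : ℝ, 0 < (x₁^2+x₂^2)^2 + c^2 := fun c => by positivity
  -- 1) deriv in a of (fun a => X1 KoranyiN a x₂ t) at x₁
  have hev1 : (fun a => X1 KoranyiN a x₂ t)
      =ᶠ[nhds x₁] (fun a => (a*(a^2+x₂^2) + x₂*t) * ((a^2+x₂^2)^2+t^2) ^ (-(3:ℝ)/4)) := by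
    have hcont : Continuous (fun a : ℝ => (a^2+x₂^2)^2+t^2) := by continuity
    have hopen : ∀ᶠ a in nhds x₁, 0 < (a^2+x₂^2)^2+t^2 :=
      (hcont.tendsto x₁).eventually (eventually_gt_nhds hρ)
    filter_upwards [hopen] with a ha
    exact X1K a x₂ t ha
  have hG1 : HasDerivAt (fun a => (a*(a^2+x₂^2) + x₂*t) * ((a^2+x₂^2)^2+t^2) ^ (-(3:ℝ)/4))
      ((3*x₁^2+x₂^2) * ((x₁^2+x₂^2)^2+t^2) ^ (-(3:ℝ)/4)
        + (x₁*(x₁^2+x₂^2) + x₂*t) * (4*x₁*(x₁^2+x₂^2) * (-(3:ℝ)/4) * ((x₁^2+x₂^2)^2+t^2) ^ (-(3:ℝ)/4 - 1))) x₁ := by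
    have hpoly : HasDerivAt (fun a : ℝ => a*(a^2+x₂^2) + x₂*t) (3*x₁^2+x₂^2) x₁ := by
      have := ((hasDerivAt_id' x₁).mul ((hasDerivAt_pow 2 x₁).add_const (x₂^2))).add_const (x₂*t)
      refine this.congr_deriv ?_; push_cast; ring
    have hrp := (inner1 x₁ x₂ t).rpow_const (p := -(3:ℝ)/4) (Or.inl hρ.ne')
    exact hpoly.mul hrp
  have hd1 : deriv (fun a => X1 KoranyiN a x₂ t) x₁
      = (3*x₁^2+x₂^2) * ((x₁^2+x₂^2)^2+t^2) ^ (-(3:ℝ)/4)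
        + (x₁*(x₁^2+x₂^2) + x₂*t) * (4*x₁*(x₁^2+x₂^2) * (-(3:ℝ)/4) * ((x₁^2+x₂^2)^2+t^2) ^ (-(3:ℝ)/4 - 1)) := by
    rw [hev1.deriv_eq, hG1.deriv]
  -- 2) deriv in t of (fun c => X1 KoranyiN x₁ x₂ c) at t
  have heq2 : (fun c => X1 KoranyiN x₁ x₂ c)
      = (fun c => (x₁*(x₁^2+x₂^2) + x₂*c) * ((x₁^2+x₂^2)^2+c^2) ^ (-(3:ℝ)/4)) := by
    funext c; exact X1K x₁ x₂ c (hρt c)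
  have hG2 : HasDerivAt (fun c => (x₁*(x₁^2+x₂^2) + x₂*c) * ((x₁^2+x₂^2)^2+c^2) ^ (-(3:ℝ)/4))
      (x₂ * ((x₁^2+x₂^2)^2+t^2) ^ (-(3:ℝ)/4)
        + (x₁*(x₁^2+x₂^2) + x₂*t) * (2*t * (-(3:ℝ)/4) * ((x₁^2+x₂^2)^2+t^2) ^ (-(3:ℝ)/4 - 1))) t := by
    have hpoly : HasDerivAt (fun c : ℝ => x₁*(x₁^2+x₂^2) + x₂*c) x₂ t := by
      have := ((hasDerivAt_id' t).const_mul x₂).const_add (x₁*(x₁^2+x₂^2))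
      refine this.congr_deriv ?_; ring
    have hrp := (inner3 x₁ x₂ t).rpow_const (p := -(3:ℝ)/4) (Or.inl hρ.ne')
    exact hpoly.mul hrp
  have hd2 : deriv (fun c => X1 KoranyiN x₁ x₂ c) t
      = x₂ * ((x₁^2+x₂^2)^2+t^2) ^ (-(3:ℝ)/4)
        + (x₁*(x₁^2+x₂^2) + x₂*t) * (2*t * (-(3:ℝ)/4) * ((x₁^2+x₂^2)^2+t^2) ^ (-(3:ℝ)/4 - 1)) := by
    rw [heq2, hG2.deriv]
  -- 3) deriv in b of (fun b => X2 KoranyiN x₁ b t) at x₂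
  have hev3 : (fun b => X2 KoranyiN x₁ b t)
      =ᶠ[nhds x₂] (fun b => (b*(x₁^2+b^2) - x₁*t) * ((x₁^2+b^2)^2+t^2) ^ (-(3:ℝ)/4)) := by
    have hcont : Continuous (fun b : ℝ => (x₁^2+b^2)^2+t^2) := by continuity
    have hopen : ∀ᶠ b in nhds x₂, 0 < (x₁^2+b^2)^2+t^2 :=
      (hcont.tendsto x₂).eventually (eventually_gt_nhds hρ)
    filter_upwards [hopen] with b hb
    exact X2K x₁ b t hb
  have hG3 : HasDerivAt (fun b => (b*(x₁^2+b^2) - x₁*t) * ((x₁^2+b^2)^2+t^2) ^ (-(3:ℝ)/4))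
      ((x₁^2+3*x₂^2) * ((x₁^2+x₂^2)^2+t^2) ^ (-(3:ℝ)/4)
        + (x₂*(x₁^2+x₂^2) - x₁*t) * (4*x₂*(x₁^2+x₂^2) * (-(3:ℝ)/4) * ((x₁^2+x₂^2)^2+t^2) ^ (-(3:ℝ)/4 - 1))) x₂ := by
    have hpoly : HasDerivAt (fun b : ℝ => b*(x₁^2+b^2) - x₁*t) (x₁^2+3*x₂^2) x₂ := by
      have := ((hasDerivAt_id' x₂).mul ((hasDerivAt_pow 2 x₂).const_add (x₁^2))).sub_const (x₁*t)
      refine this.congr_deriv ?_; push_cast; ring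
    have hrp := (inner2 x₁ x₂ t).rpow_const (p := -(3:ℝ)/4) (Or.inl hρ.ne')
    exact hpoly.mul hrp
  have hd3 : deriv (fun b => X2 KoranyiN x₁ b t) x₂
      = (x₁^2+3*x₂^2) * ((x₁^2+x₂^2)^2+t^2) ^ (-(3:ℝ)/4)
        + (x₂*(x₁^2+x₂^2) - x₁*t) * (4*x₂*(x₁^2+x₂^2) * (-(3:ℝ)/4) * ((x₁^2+x₂^2)^2+t^2) ^ (-(3:ℝ)/4 - 1)) := by
    rw [hev3.deriv_eq, hG3.deriv]
  -- 4) deriv in t of (fun c => X2 KoranyiN x₁ x₂ c) at t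
  have heq4 : (fun c => X2 KoranyiN x₁ x₂ c)
      = (fun c => (x₂*(x₁^2+x₂^2) - x₁*c) * ((x₁^2+x₂^2)^2+c^2) ^ (-(3:ℝ)/4)) := by
    funext c; exact X2K x₁ x₂ c (hρt c)
  have hG4 : HasDerivAt (fun c => (x₂*(x₁^2+x₂^2) - x₁*c) * ((x₁^2+x₂^2)^2+c^2) ^ (-(3:ℝ)/4))
      ((-x₁) * ((x₁^2+x₂^2)^2+t^2) ^ (-(3:ℝ)/4)
        + (x₂*(x₁^2+x₂^2) - x₁*t) * (2*t * (-(3:ℝ)/4) * ((x₁^2+x₂^2)^2+t^2) ^ (-(3:ℝ)/4 - 1))) t := by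
    have hpoly : HasDerivAt (fun c : ℝ => x₂*(x₁^2+x₂^2) - x₁*c) (-x₁) t := by
      have := ((hasDerivAt_id' t).const_mul x₁).const_sub (x₂*(x₁^2+x₂^2))
      refine this.congr_deriv ?_; ring
    have hrp := (inner3 x₁ x₂ t).rpow_const (p := -(3:ℝ)/4) (Or.inl hρ.ne')
    exact hpoly.mul hrp
  have hd4 : deriv (fun c => X2 KoranyiN x₁ x₂ c) t
      = (-x₁) * ((x₁^2+x₂^2)^2+t^2) ^ (-(3:ℝ)/4)
        + (x₂*(x₁^2+x₂^2) - x₁*t) * (2*t * (-(3:ℝ)/4) * ((x₁^2+x₂^2)^2+t^2) ^ (-(3:ℝ)/4 - 1)) := by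
    rw [heq4, hG4.deriv]
  -- assemble
  have hX1 : X1 KoranyiN x₁ x₂ t
      = (x₁*(x₁^2+x₂^2) + x₂*t) * ((x₁^2+x₂^2)^2+t^2) ^ (-(3:ℝ)/4) := X1K x₁ x₂ t hρ
  have hX2 : X2 KoranyiN x₁ x₂ t
      = (x₂*(x₁^2+x₂^2) - x₁*t) * ((x₁^2+x₂^2)^2+t^2) ^ (-(3:ℝ)/4) := X2K x₁ x₂ t hρ
  have hE : (-(3:ℝ)/4 - 1) = -(7:ℝ)/4 := by norm_num
  rw [hE] at hd1 hd2 hd3 hd4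
  have hB : ((x₁^2+x₂^2)^2+t^2) ^ (-(3:ℝ)/4)
      = ((x₁^2+x₂^2)^2+t^2) * ((x₁^2+x₂^2)^2+t^2) ^ (-(7:ℝ)/4) := by
    rw [show (-(3:ℝ)/4) = 1 + (-(7:ℝ)/4) by norm_num, Real.rpow_add hρ, Real.rpow_one]
  have hB2 : (((x₁^2+x₂^2)^2+t^2) ^ (-(3:ℝ)/4))^2
      = ((x₁^2+x₂^2)^2+t^2) ^ (-(7:ℝ)/4) * ((x₁^2+x₂^2)^2+t^2) ^ ((1:ℝ)/4) := by
    rw [← Real.rpow_natCast (((x₁^2+x₂^2)^2+t^2) ^ (-(3:ℝ)/4)) 2, ← Real.rpow_mul hρ.le,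
      ← Real.rpow_add hρ]
    norm_num
  have hN : KoranyiN x₁ x₂ t = ((x₁^2+x₂^2)^2+t^2) ^ ((1:ℝ)/4) := rfl
  have hNpos : (0:ℝ) < ((x₁^2+x₂^2)^2+t^2) ^ ((1:ℝ)/4) := Real.rpow_pos_of_pos hρ _
  show deriv (fun a => X1 KoranyiN a x₂ t) x₁ + 2 * x₂ * deriv (fun a => X1 KoranyiN x₁ x₂ a) t
      + (deriv (fun a => X2 KoranyiN x₁ a t) x₂ - 2 * x₁ * deriv (fun a => X2 KoranyiN x₁ x₂ a) t)
      = _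
  rw [hd1, hd2, hd3, hd4, hX1, hX2, hN]
  rw [eq_div_iff hNpos.ne']
  linear_combination (6*(x₁^2+x₂^2) * (((x₁^2+x₂^2)^2+t^2) ^ ((1:ℝ)/4))) * hB
    + (-(3*((x₁*(x₁^2+x₂^2)+x₂*t)^2+(x₂*(x₁^2+x₂^2)-x₁*t)^2))) * hB2
end

section
/- Let Q be a real number, Ω ⊆ ℝ^m open, and N: Ω → ℝ a positive C² function with nonvanishing gradient. If div(N·∇N/|∇N|²) = Q on Ω and ΔN = (Q-1)|∇N|²/N on Ω, then the ∞-Laplacian Δ_∞ N := (1/2)⟨∇(|∇N|²), ∇N⟩ vanishes identically on Ω. -/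
open scoped RealInnerProductSpace

lemma hasFDerivAt_div' {E : Type*} [NormedAddCommGroup E] [NormedSpace ℝ E]
    {c d : E → ℝ} {c' d' : E →L[ℝ] ℝ} {x : E}
    (hc : HasFDerivAt c c' x) (hd : HasFDerivAt d d' x) (h0 : d x ≠ 0) :
    HasFDerivAt (fun y => c y / d y)
      ((d x)⁻¹ • c' - (c x / d x ^ 2) • d') x := by
  have h1 : HasFDerivAt (fun y => (d y)⁻¹) ((-(d x ^ 2)⁻¹) • d') x := by
    exact (hasDerivAt_inv h0).comp_hasFDerivAt x hd
  have h2 := hc.mul h1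
  have heq : (fun y => c y / d y) = fun y => c y * (d y)⁻¹ := by
    funext y; rw [div_eq_mul_inv]
  rw [heq]
  rw [show (fun y => c y * (d y)⁻¹) = (c * fun y => (d y)⁻¹) from rfl]
  refine h2.congr_fderiv ?_
  ext v
  simp only [ContinuousLinearMap.sub_apply, ContinuousLinearMap.smul_apply,
    ContinuousLinearMap.add_apply, smul_eq_mul]
  ring

/-- If `N` is a positive `C³` function with nonvanishing gradient on an open `Ω ⊆ ℝ^m`
satisfying `div(N ∇N/|∇N|²) = Q` and `ΔN = (Q-1)|∇N|²/N` on `Ω`, then the ∞-Laplacian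
`Δ_∞ N = (1/2)⟨∇(|∇N|²), ∇N⟩` vanishes on `Ω`. -/
theorem stmt_10 (m : ℕ) (Q : ℝ)
    (Ω : Set (EuclideanSpace ℝ (Fin m))) (hΩ : IsOpen Ω)
    (N : EuclideanSpace ℝ (Fin m) → ℝ)
    (hN : ContDiffOn ℝ 3 N Ω)
    (hpos : ∀ x ∈ Ω, 0 < N x)
    (hgrad : ∀ x ∈ Ω, gradient N x ≠ 0)
    (hdiv : ∀ x ∈ Ω,
      ∑ j : Fin m,
        fderiv ℝ (fun y => (N y / ‖gradient N y‖ ^ 2) • gradient N y) x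
          (EuclideanSpace.single j 1) j = Q)
    (hlap : ∀ x ∈ Ω,
      ∑ j : Fin m,
        fderiv ℝ (fun y => gradient N y) x (EuclideanSpace.single j 1) j
        = (Q - 1) * ‖gradient N x‖ ^ 2 / N x) :
    ∀ x ∈ Ω,
      (1 / 2) * ⟪gradient (fun y => ‖gradient N y‖ ^ 2) x, gradient N x⟫ = 0 := by
  intro x hx
  -- differentiability facts
  have hmem : Ω ∈ nhds x := hΩ.mem_nhds hx
  have hNx : DifferentiableAt ℝ N x :=
    (hN.differentiableOn (by norm_num)).differentiableAt hmem
  have hgc : ContDiffOn ℝ 2 (fun y => gradient N y) Ω := by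
    have h1 : ContDiffOn ℝ 2 (fun y => fderiv ℝ N y) Ω :=
      hN.fderiv_of_isOpen hΩ (by norm_num)
    exact ((InnerProductSpace.toDual ℝ
      (EuclideanSpace ℝ (Fin m))).symm.contDiff.comp_contDiffOn h1)
  have hgx : DifferentiableAt ℝ (fun y => gradient N y) x :=
    (hgc.differentiableOn (by norm_num)).differentiableAt hmem
  have hnx : DifferentiableAt ℝ (fun y => ‖gradient N y‖ ^ 2) x := hgx.norm_sq ℝ
  -- basic quantities
  have ha : 0 < N x := hpos x hx
  have hn0 : ‖gradient N x‖ ^ 2 ≠ 0 :=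
    pow_ne_zero 2 (norm_ne_zero_iff.mpr (hgrad x hx))
  -- coordinates of gradients
  have hcoord : ∀ (h : EuclideanSpace ℝ (Fin m) → ℝ) (j : Fin m),
      fderiv ℝ h x (EuclideanSpace.single j 1) = gradient h x j := by
    intro h j
    have h1 : ⟪gradient h x, EuclideanSpace.single j (1:ℝ)⟫
        = fderiv ℝ h x (EuclideanSpace.single j 1) := by
      simp [gradient, InnerProductSpace.toDual_symm_apply]
    rw [← h1, EuclideanSpace.inner_single_right]
    simp
  -- derivative of the vector field
  have hc : HasFDerivAt (fun y => N y / ‖gradient N y‖ ^ 2)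
      ((‖gradient N x‖ ^ 2)⁻¹ • fderiv ℝ N x
        - (N x / (‖gradient N x‖ ^ 2) ^ 2) • fderiv ℝ (fun y => ‖gradient N y‖ ^ 2) x) x :=
    hasFDerivAt_div' hNx.hasFDerivAt hnx.hasFDerivAt hn0
  have hF := hc.smul hgx.hasFDerivAt
  have hfd := hF.fderiv
  have hsum := hdiv x hx
  rw [show (fun y => (N y / ‖gradient N y‖ ^ 2) • gradient N y) = ((fun y => N y / ‖gradient N y‖ ^ 2) • fun y => gradient N y) from rfl, hfd] at hsum
  simp only [ContinuousLinearMap.add_apply, ContinuousLinearMap.coe_smul',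
    Pi.smul_apply, ContinuousLinearMap.smulRight_apply, ContinuousLinearMap.sub_apply,
    ContinuousLinearMap.smul_apply, smul_eq_mul, PiLp.add_apply, PiLp.smul_apply,
    hcoord] at hsum
  -- reorganize the sum
  set T : ℝ := ⟪gradient (fun y => ‖gradient N y‖ ^ 2) x, gradient N x⟫ with hT
  have hS2 : ∑ j : Fin m, gradient N x j * gradient N x j = ‖gradient N x‖ ^ 2 := by
    rw [← real_inner_self_eq_norm_sq, PiLp.inner_apply]
    simp only [RCLike.inner_apply, conj_trivial]
  have hS3 : ∑ j : Fin m,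
      gradient (fun y => ‖gradient N y‖ ^ 2) x j * gradient N x j = T := by
    rw [hT, PiLp.inner_apply]
    simp only [RCLike.inner_apply, conj_trivial]
    exact Finset.sum_congr rfl (fun j _ => mul_comm _ _)
  have hsum2 : (N x / ‖gradient N x‖ ^ 2) *
        (∑ j : Fin m, fderiv ℝ (fun y => gradient N y) x (EuclideanSpace.single j 1) j)
      + (‖gradient N x‖ ^ 2)⁻¹ * (∑ j : Fin m, gradient N x j * gradient N x j)
      - (N x / (‖gradient N x‖ ^ 2) ^ 2) *
        (∑ j : Fin m, gradient (fun y => ‖gradient N y‖ ^ 2) x j * gradient N x j) = Q := by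
    rw [← hsum, Finset.mul_sum, Finset.mul_sum, Finset.mul_sum, ← Finset.sum_add_distrib,
      ← Finset.sum_sub_distrib]
    apply Finset.sum_congr rfl
    intro j _
    ring
  rw [hlap x hx, hS2, hS3] at hsum2
  have h1 : (N x / ‖gradient N x‖ ^ 2) * ((Q - 1) * ‖gradient N x‖ ^ 2 / N x) = Q - 1 := by
    field_simp [norm_ne_zero_iff.mpr (hgrad x hx)]
  have h2 : (‖gradient N x‖ ^ 2)⁻¹ * ‖gradient N x‖ ^ 2 = 1 := inv_mul_cancel₀ hn0
  rw [h1, h2] at hsum2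
  have h3 : (N x / (‖gradient N x‖ ^ 2) ^ 2) * T = 0 := by linarith
  have h4 : N x / (‖gradient N x‖ ^ 2) ^ 2 ≠ 0 := by positivity
  have h5 : T = 0 := by
    rcases mul_eq_zero.mp h3 with h | h
    · exact absurd h h4
    · exact h
  rw [h5]; ring
end
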